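/- Let n, m ≥ 1, let a ∈ ℝ^n and b ∈ ℝ^m be probability vectors, let x : {1,…,n} → ℝ and y : {1,…,m} → ℝ, and let p ≥ 1 be a real number. Define the CDFs F(t) = ∑_{i : x_i ≤ t} a_i and G(t) = ∑_{j : y_j ≤ t} b_j, and the quantile functions F⁻¹(u) = inf{t ∈ ℝ : F(t) ≥ u} and G⁻¹(u) = inf{t ∈ ℝ : G(t) ≥ u} for u ∈ (0,1). Then the infimum over P ∈ U(a,b) of ∑_{i,j} P_{ij} |x_i − y_j|^p is attained and equals ∫_0^1 |F⁻¹(u) − G⁻¹(u)|^p du. -/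

import Mathlib

open Finset MeasureTheory

/-- A probability vector: nonnegative entries summing to 1. -/
def IsProbVec {n : ℕ} (a : Fin n → ℝ) : Prop :=
  (∀ i, 0 ≤ a i) ∧ ∑ i, a i = 1

/-- The transportation polytope `U(a,b)`. -/
def transportPolytope {n m : ℕ} (a : Fin n → ℝ) (b : Fin m → ℝ) :
    Set (Fin n → Fin m → ℝ) :=
  {P | (∀ i j, 0 ≤ P i j) ∧ (∀ i, ∑ j, P i j = a i) ∧ (∀ j, ∑ i, P i j = b j)}

namespace Stmt5Aux

def cum {n : ℕ} (a : Fin n → ℝ) (i : ℕ) : ℝ := ∑ k : Fin n, if (k : ℕ) < i then a k else 0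

lemma cum_zero {n : ℕ} (a : Fin n → ℝ) : cum a 0 = 0 := by simp [cum]

lemma cum_top {n : ℕ} (a : Fin n → ℝ) : cum a n = ∑ k, a k := by
  unfold cum; apply Finset.sum_congr rfl; intro k _; simp [k.isLt]

lemma cum_mono {n : ℕ} {a : Fin n → ℝ} (ha : ∀ i, 0 ≤ a i) : Monotone (cum a) := by
  intro i j hij
  apply Finset.sum_le_sum
  intro k _
  by_cases h : (k : ℕ) < i
  · simp [h, lt_of_lt_of_le h hij]
  · simp only [h, if_false]
    split_ifs with h2
    · exact ha k
    · exact le_refl 0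

lemma cum_succ {n : ℕ} (a : Fin n → ℝ) (i : Fin n) :
    cum a ((i : ℕ) + 1) = cum a i + a i := by
  unfold cum
  have : ∀ k : Fin n, (if (k:ℕ) < (i:ℕ) + 1 then a k else 0)
      = (if (k:ℕ) < (i:ℕ) then a k else 0) + (if k = i then a k else 0) := by
    intro k
    rcases lt_trichotomy (k : ℕ) (i : ℕ) with h | h | h
    · simp [h, Nat.lt_succ_of_lt h, Fin.ne_of_val_ne (Nat.ne_of_lt h)]
    · have : k = i := Fin.ext h
      simp [this, h]
    · have h1 : ¬ ((k:ℕ) < (i:ℕ) + 1) := by omega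
      rw [if_neg h1, if_neg (by omega : ¬ (k:ℕ) < (i:ℕ)), if_neg (Fin.ne_of_val_ne (by omega : (k:ℕ) ≠ (i:ℕ)))]
      ring
  rw [Finset.sum_congr rfl (fun k _ => this k), Finset.sum_add_distrib, Finset.sum_ite_eq' univ i a]
  simp

lemma cum_nonneg {n : ℕ} {a : Fin n → ℝ} (ha : ∀ i, 0 ≤ a i) (i : ℕ) : 0 ≤ cum a i := by
  rw [← cum_zero a]; exact cum_mono ha (Nat.zero_le i)

lemma cum_le_one {n : ℕ} {a : Fin n → ℝ} (ha : IsProbVec a) {i : ℕ} (hi : i ≤ n) :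
    cum a i ≤ 1 := by
  calc cum a i ≤ cum a n := cum_mono ha.1 hi
    _ = 1 := by rw [cum_top]; exact ha.2

lemma clamp_id {c d e f : ℝ} (hcd : c ≤ d) (hef : e ≤ f) :
    max 0 (min d f - max c e) = min d (max c f) - min d (max c e) := by
  rcases le_total c e with h1 | h1 <;> rcases le_total c f with h2 | h2 <;>
    rcases le_total d e with h3 | h3 <;> rcases le_total d f with h4 | h4 <;>
    simp [min_def, max_def] <;> split_ifs <;> linarith

/-- The northwest / monotone coupling. -/
def NW {n m : ℕ} (a : Fin n → ℝ) (b : Fin m → ℝ) (i : Fin n) (j : Fin m) : ℝ :=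
  max 0 (min (cum a ((i:ℕ) + 1)) (cum b ((j:ℕ) + 1)) - max (cum a (i:ℕ)) (cum b (j:ℕ)))

lemma rowsum_aux {m : ℕ} (B : ℕ → ℝ) (hB : Monotone B) (hB0 : B 0 = 0) (hBm : B m = 1)
    {c d : ℝ} (hc : 0 ≤ c) (hcd : c ≤ d) (hd : d ≤ 1) :
    ∑ j : Fin m, max 0 (min d (B ((j:ℕ) + 1)) - max c (B (j:ℕ))) = d - c := by
  have key : ∀ j : Fin m, max 0 (min d (B ((j:ℕ)+1)) - max c (B (j:ℕ)))
      = (fun k : ℕ => min d (max c (B k))) ((j:ℕ)+1) - (fun k : ℕ => min d (max c (B k))) (j:ℕ) := by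
    intro j
    exact clamp_id hcd (hB (Nat.le_succ _))
  rw [Finset.sum_congr rfl (fun j _ => key j)]
  rw [Fin.sum_univ_eq_sum_range (fun k : ℕ => (fun k : ℕ => min d (max c (B k))) (k + 1) - (fun k : ℕ => min d (max c (B k))) k)]
  rw [Finset.sum_range_sub (fun k : ℕ => min d (max c (B k)))]
  rw [hBm, hB0]
  rw [max_eq_left hc, max_eq_right (hcd.trans hd), min_eq_left hd, min_eq_right hcd]

lemma NW_mem {n m : ℕ} {a : Fin n → ℝ} {b : Fin m → ℝ}
    (ha : IsProbVec a) (hb : IsProbVec b) : NW a b ∈ transportPolytope a b := by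
  refine ⟨fun i j => le_max_left _ _, fun i => ?_, fun j => ?_⟩
  · have := rowsum_aux (cum b) (cum_mono hb.1) (cum_zero b) (by rw [cum_top]; exact hb.2)
      (cum_nonneg ha.1 (i:ℕ)) (cum_mono ha.1 (Nat.le_succ _)) (cum_le_one ha i.isLt)
    rw [show (∑ j, NW a b i j) = ∑ j : Fin m,
        max 0 (min (cum a ((i:ℕ)+1)) (cum b ((j:ℕ) + 1)) - max (cum a (i:ℕ)) (cum b (j:ℕ))) from rfl]
    rw [this, cum_succ]; ring
  · have comm : ∀ i : Fin n, NW a b i j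
        = max 0 (min (cum b ((j:ℕ)+1)) (cum a ((i:ℕ) + 1)) - max (cum b (j:ℕ)) (cum a (i:ℕ))) := by
      intro i; rw [NW, min_comm, max_comm (cum a (i:ℕ))]
    rw [Finset.sum_congr rfl (fun i _ => comm i)]
    have := rowsum_aux (cum a) (cum_mono ha.1) (cum_zero a) (by rw [cum_top]; exact ha.2)
      (cum_nonneg hb.1 (j:ℕ)) (cum_mono hb.1 (Nat.le_succ _)) (cum_le_one hb j.isLt)
    rw [this, cum_succ]; ring


lemma quantile_eq {n : ℕ} {a : Fin n → ℝ} (ha : ∀ i, 0 ≤ a i) {x : Fin n → ℝ} (hx : Monotone x)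
    {F : ℝ → ℝ} (hF : ∀ t, F t = ∑ i, if x i ≤ t then a i else 0)
    {u : ℝ} {i : Fin n} (h1 : cum a (i:ℕ) < u) (h2 : u ≤ cum a ((i:ℕ)+1)) :
    sInf {t : ℝ | u ≤ F t} = x i := by
  have hmem : x i ∈ {t : ℝ | u ≤ F t} := by
    have : cum a ((i:ℕ)+1) ≤ F (x i) := by
      rw [hF]
      apply Finset.sum_le_sum
      intro k _
      by_cases h : (k:ℕ) < (i:ℕ) + 1
      · have : x k ≤ x i := hx (by omega : k ≤ i)
        simp [h, this]
      · simp only [h, if_false]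
        split_ifs with h2
        · exact ha k
        · exact le_refl 0
    exact le_trans h2 this
  have hlb : ∀ t ∈ {t : ℝ | u ≤ F t}, x i ≤ t := by
    intro t ht
    by_contra hlt
    push_neg at hlt
    have hFt : F t ≤ cum a (i:ℕ) := by
      rw [hF]
      apply Finset.sum_le_sum
      intro k _
      by_cases h : x k ≤ t
      · have hk : (k:ℕ) < (i:ℕ) := by
          by_contra hk
          push_neg at hk
          exact absurd (le_trans (hx (by omega : i ≤ k)) h) (not_le.2 hlt)
        simp [h, hk]
      · simp only [h, if_false]
        split_ifs with h2
        · exact ha k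
        · exact le_refl 0
    exact absurd (le_trans ht hFt) (not_le.2 h1)
  exact le_antisymm (csInf_le ⟨x i, hlb⟩ hmem) (le_csInf ⟨x i, hmem⟩ hlb)

lemma exists_idx {n : ℕ} (hn : 1 ≤ n) {a : Fin n → ℝ} (ha : IsProbVec a)
    {u : ℝ} (h0 : 0 < u) (h1 : u ≤ 1) :
    ∃ i : Fin n, cum a (i:ℕ) < u ∧ u ≤ cum a ((i:ℕ)+1) := by
  classical
  set s : Finset ℕ := (Finset.range n).filter (fun k => cum a k < u) with hs
  have h0s : 0 ∈ s := by
    simp [hs, cum_zero, h0]; omega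
  have hne : s.Nonempty := ⟨0, h0s⟩
  set i := s.max' hne with hi
  have his : i ∈ s := s.max'_mem hne
  simp only [hs, Finset.mem_filter, Finset.mem_range] at his
  refine ⟨⟨i, his.1⟩, his.2, ?_⟩
  by_cases h : i + 1 < n
  · by_contra hc
    push_neg at hc
    have : i + 1 ∈ s := by simp [hs, h, hc]
    have := s.le_max' _ this
    omega
  · have : i + 1 = n := by omega
    rw [this, cum_top, ha.2]; exact h1

lemma idx_unique {n : ℕ} {a : Fin n → ℝ} (ha : ∀ i, 0 ≤ a i) {u : ℝ} {i i' : Fin n}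
    (h1 : cum a (i:ℕ) < u) (h2 : u ≤ cum a ((i:ℕ)+1))
    (h1' : cum a (i':ℕ) < u) (h2' : u ≤ cum a ((i':ℕ)+1)) : i = i' := by
  by_contra hne
  rcases Fin.lt_or_lt_of_ne hne with h | h
  · exact absurd (le_trans h2 (cum_mono ha (by omega : (i:ℕ)+1 ≤ (i':ℕ)))) (not_le.2 h1')
  · exact absurd (le_trans h2' (cum_mono ha (by omega : (i':ℕ)+1 ≤ (i:ℕ)))) (not_le.2 h1)


lemma integral_eq_NW_cost {n m : ℕ} (hn : 1 ≤ n) (hm : 1 ≤ m)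
    {a : Fin n → ℝ} {b : Fin m → ℝ} (ha : IsProbVec a) (hb : IsProbVec b)
    {x : Fin n → ℝ} {y : Fin m → ℝ} (hx : Monotone x) (hy : Monotone y) (p : ℝ)
    {F G : ℝ → ℝ}
    (hF : ∀ t, F t = ∑ i, if x i ≤ t then a i else 0)
    (hG : ∀ t, G t = ∑ j, if y j ≤ t then b j else 0)
    {Finv Ginv : ℝ → ℝ}
    (hFinv : ∀ u, Finv u = sInf {t : ℝ | u ≤ F t})
    (hGinv : ∀ u, Ginv u = sInf {t : ℝ | u ≤ G t}) :
    ∫ u in Set.Ioo (0 : ℝ) 1, |Finv u - Ginv u| ^ p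
      = ∑ i, ∑ j, NW a b i j * |x i - y j| ^ p := by
  classical
  set E : Fin n → Fin m → Set ℝ := fun i j =>
    Set.Ioc (cum a (i:ℕ)) (cum a ((i:ℕ)+1)) ∩ Set.Ioc (cum b (j:ℕ)) (cum b ((j:ℕ)+1)) with hE
  have hEsub : ∀ i j, E i j ⊆ Set.Ioc (0:ℝ) 1 := by
    intro i j u hu
    exact ⟨lt_of_le_of_lt (cum_nonneg ha.1 _) hu.1.1,
      le_trans hu.1.2 (cum_le_one ha i.isLt)⟩
  have hEmeas : ∀ i j, MeasurableSet (E i j) := fun i j =>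
    (measurableSet_Ioc.inter measurableSet_Ioc)
  set s : ℝ → ℝ := fun u => ∑ i, ∑ j, (E i j).indicator (fun _ => |x i - y j| ^ p) u with hs
  have step1 : ∫ u in Set.Ioo (0 : ℝ) 1, |Finv u - Ginv u| ^ p
      = ∫ u in Set.Ioc (0 : ℝ) 1, s u := by
    rw [← MeasureTheory.integral_Ioc_eq_integral_Ioo]
    apply MeasureTheory.setIntegral_congr_fun measurableSet_Ioc
    intro u hu
    obtain ⟨i, hi1, hi2⟩ := exists_idx hn ha hu.1 hu.2
    obtain ⟨j, hj1, hj2⟩ := exists_idx hm hb hu.1 hu.2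
    have hFu : Finv u = x i := by rw [hFinv]; exact quantile_eq ha.1 hx hF hi1 hi2
    have hGu : Ginv u = y j := by rw [hGinv]; exact quantile_eq hb.1 hy hG hj1 hj2
    have key : ∀ i' : Fin n, ∀ j' : Fin m,
        (E i' j').indicator (fun _ => |x i' - y j'| ^ p) u
        = if i' = i then (if j' = j then |x i - y j| ^ p else 0) else 0 := by
      intro i' j'
      by_cases h : i' = i ∧ j' = j
      · obtain ⟨rfl, rfl⟩ := h
        have hmem : u ∈ E i' j' := ⟨⟨hi1, hi2⟩, ⟨hj1, hj2⟩⟩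
        rw [Set.indicator_of_mem hmem]
        simp
      · have hnot : u ∉ E i' j' := by
          intro hu'
          exact h ⟨idx_unique ha.1 hu'.1.1 hu'.1.2 hi1 hi2,
            idx_unique hb.1 hu'.2.1 hu'.2.2 hj1 hj2⟩
        rw [Set.indicator_of_notMem hnot]
        by_cases hii : i' = i
        · rw [if_pos hii, if_neg (fun hjj => h ⟨hii, hjj⟩)]
        · rw [if_neg hii]
    simp only [hs, hFu, hGu]
    rw [Finset.sum_congr rfl (fun i' _ => Finset.sum_congr rfl (fun j' _ => key i' j'))]
    simp [Finset.sum_ite_eq']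
  rw [step1]
  have step2 : ∫ u in Set.Ioc (0 : ℝ) 1, s u
      = ∑ i, ∑ j, ∫ u in Set.Ioc (0 : ℝ) 1, (E i j).indicator (fun _ => |x i - y j| ^ p) u := by
    rw [hs]
    rw [MeasureTheory.integral_finset_sum]
    · apply Finset.sum_congr rfl; intro i _
      rw [MeasureTheory.integral_finset_sum]
      intro j _
      apply (MeasureTheory.integrable_indicator_iff (hEmeas i j)).2
      refine MeasureTheory.integrableOn_const ?_ enorm_ne_top
      exact (lt_of_le_of_lt ((MeasureTheory.Measure.restrict_apply_le _ _).trans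
        (measure_mono (hEsub i j)))
        (by rw [Real.volume_Ioc]; exact ENNReal.ofReal_lt_top)).ne
    · intro i _
      apply MeasureTheory.integrable_finset_sum
      intro j _
      apply (MeasureTheory.integrable_indicator_iff (hEmeas i j)).2
      refine MeasureTheory.integrableOn_const ?_ enorm_ne_top
      exact (lt_of_le_of_lt ((MeasureTheory.Measure.restrict_apply_le _ _).trans
        (measure_mono (hEsub i j)))
        (by rw [Real.volume_Ioc]; exact ENNReal.ofReal_lt_top)).ne
  rw [step2]
  apply Finset.sum_congr rfl; intro i _
  apply Finset.sum_congr rfl; intro j _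
  rw [MeasureTheory.setIntegral_indicator (hEmeas i j)]
  rw [Set.inter_eq_self_of_subset_right (hEsub i j)]
  rw [MeasureTheory.setIntegral_const]
  have hEeq : E i j = Set.Ioc (max (cum a (i:ℕ)) (cum b (j:ℕ)))
      (min (cum a ((i:ℕ)+1)) (cum b ((j:ℕ)+1))) := Set.Ioc_inter_Ioc
  rw [hEeq, Real.volume_real_Ioc, smul_eq_mul, NW, max_comm]


/-- no "crossing" in the support -/
def NoCross {n m : ℕ} (P : Fin n → Fin m → ℝ) : Prop :=
  ∀ (i k : Fin n) (j l : Fin m), (i:ℕ) < (k:ℕ) → (l:ℕ) < (j:ℕ) →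
    0 < P i j → 0 < P k l → False

def Hf {n m : ℕ} (P : Fin n → Fin m → ℝ) (i j : ℕ) : ℝ :=
  ∑ i' : Fin n, ∑ j' : Fin m, if (i':ℕ) < i ∧ (j':ℕ) < j then P i' j' else 0

lemma Hf_rec {n m : ℕ} (P : Fin n → Fin m → ℝ) (i : Fin n) (j : Fin m) :
    P i j = Hf P ((i:ℕ)+1) ((j:ℕ)+1) - Hf P (i:ℕ) ((j:ℕ)+1)
      - Hf P ((i:ℕ)+1) (j:ℕ) + Hf P (i:ℕ) (j:ℕ) := by
  unfold Hf
  rw [← Finset.sum_sub_distrib, ← Finset.sum_sub_distrib, ← Finset.sum_add_distrib]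
  have inner : ∀ i' : Fin n,
      ((∑ j' : Fin m, if (i':ℕ) < (i:ℕ)+1 ∧ (j':ℕ) < (j:ℕ)+1 then P i' j' else 0)
        - (∑ j' : Fin m, if (i':ℕ) < (i:ℕ) ∧ (j':ℕ) < (j:ℕ)+1 then P i' j' else 0)
        - (∑ j' : Fin m, if (i':ℕ) < (i:ℕ)+1 ∧ (j':ℕ) < (j:ℕ) then P i' j' else 0)
        + (∑ j' : Fin m, if (i':ℕ) < (i:ℕ) ∧ (j':ℕ) < (j:ℕ) then P i' j' else 0))
      = ∑ j' : Fin m, (if i' = i then (if j' = j then P i' j' else 0) else 0) := by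
    intro i'
    rw [← Finset.sum_sub_distrib, ← Finset.sum_sub_distrib, ← Finset.sum_add_distrib]
    apply Finset.sum_congr rfl
    intro j' _
    have hi' : i' = i ↔ (i':ℕ) = (i:ℕ) := Fin.ext_iff
    have hj' : j' = j ↔ (j':ℕ) = (j:ℕ) := Fin.ext_iff
    rw [show (if i' = i then (if j' = j then P i' j' else 0) else 0)
        = (if (i':ℕ) = (i:ℕ) then (if (j':ℕ) = (j:ℕ) then P i' j' else 0) else 0) by
      simp only [hi', hj']]
    split_ifs <;> first | (exfalso; omega) | ring
  rw [Finset.sum_congr rfl (fun i' _ => inner i')]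
  simp [Finset.sum_ite_eq']

lemma Hf_le_left {n m : ℕ} {a : Fin n → ℝ} {b : Fin m → ℝ}
    {P : Fin n → Fin m → ℝ} (hP : P ∈ transportPolytope a b) (i j : ℕ) :
    Hf P i j ≤ cum a i := by
  unfold Hf cum
  apply Finset.sum_le_sum
  intro i' _
  by_cases h : (i':ℕ) < i
  · rw [if_pos h, ← hP.2.1 i']
    apply Finset.sum_le_sum
    intro j' _
    split_ifs
    · exact le_refl _
    · exact hP.1 i' j'
  · simp only [h, false_and, if_false]
    simp

lemma Hf_le_right {n m : ℕ} {a : Fin n → ℝ} {b : Fin m → ℝ}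
    {P : Fin n → Fin m → ℝ} (hP : P ∈ transportPolytope a b) (i j : ℕ) :
    Hf P i j ≤ cum b j := by
  unfold Hf cum
  rw [Finset.sum_comm]
  apply Finset.sum_le_sum
  intro j' _
  by_cases h : (j':ℕ) < j
  · rw [if_pos h, ← hP.2.2 j']
    apply Finset.sum_le_sum
    intro i' _
    split_ifs
    · exact le_refl _
    · exact hP.1 i' j'
  · simp only [h, and_false, if_false]
    simp

lemma Hf_eq_min {n m : ℕ} {a : Fin n → ℝ} {b : Fin m → ℝ}
    {P : Fin n → Fin m → ℝ} (hP : P ∈ transportPolytope a b) (hnc : NoCross P)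
    (i j : ℕ) : Hf P i j = min (cum a i) (cum b j) := by
  set D1 : ℝ := ∑ i' : Fin n, ∑ j' : Fin m,
    if (i':ℕ) < i ∧ ¬ ((j':ℕ) < j) then P i' j' else 0 with hD1
  set D2 : ℝ := ∑ i' : Fin n, ∑ j' : Fin m,
    if ¬ ((i':ℕ) < i) ∧ (j':ℕ) < j then P i' j' else 0 with hD2
  have hsplit1 : Hf P i j + D1 = cum a i := by
    rw [hD1]
    unfold Hf cum
    rw [← Finset.sum_add_distrib]
    apply Finset.sum_congr rfl
    intro i' _
    rw [← Finset.sum_add_distrib]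
    by_cases h : (i':ℕ) < i
    · rw [if_pos h, ← hP.2.1 i']
      apply Finset.sum_congr rfl
      intro j' _
      by_cases h2 : (j':ℕ) < j <;> simp [h, h2]
    · rw [if_neg h]
      apply Finset.sum_eq_zero
      intro j' _
      simp [h]
  have hsplit2 : Hf P i j + D2 = cum b j := by
    rw [hD2]
    unfold Hf cum
    rw [Finset.sum_comm,
      show (∑ i' : Fin n, ∑ j' : Fin m, if ¬(i':ℕ) < i ∧ (j':ℕ) < j then P i' j' else 0)
        = ∑ j' : Fin m, ∑ i' : Fin n, if ¬(i':ℕ) < i ∧ (j':ℕ) < j then P i' j' else 0 from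
      Finset.sum_comm, ← Finset.sum_add_distrib]
    apply Finset.sum_congr rfl
    intro j' _
    rw [← Finset.sum_add_distrib]
    by_cases h : (j':ℕ) < j
    · rw [if_pos h, ← hP.2.2 j']
      apply Finset.sum_congr rfl
      intro i' _
      by_cases h2 : (i':ℕ) < i <;> simp [h, h2]
    · rw [if_neg h]
      apply Finset.sum_eq_zero
      intro i' _
      simp [h]
  have hD1nn : 0 ≤ D1 := by
    rw [hD1]
    apply Finset.sum_nonneg; intro i' _
    apply Finset.sum_nonneg; intro j' _
    split_ifs
    · exact hP.1 i' j'
    · exact le_refl 0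
  have hD2nn : 0 ≤ D2 := by
    rw [hD2]
    apply Finset.sum_nonneg; intro i' _
    apply Finset.sum_nonneg; intro j' _
    split_ifs
    · exact hP.1 i' j'
    · exact le_refl 0
  have hzero : D1 = 0 ∨ D2 = 0 := by
    by_contra hc
    push_neg at hc
    have hd1 : 0 < D1 := lt_of_le_of_ne hD1nn (Ne.symm hc.1)
    have hd2 : 0 < D2 := lt_of_le_of_ne hD2nn (Ne.symm hc.2)
    -- extract positive entries
    have ex1 : ∃ (i₁ : Fin n) (j₁ : Fin m), (i₁:ℕ) < i ∧ ¬ ((j₁:ℕ) < j) ∧ 0 < P i₁ j₁ := by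
      rw [hD1] at hd1
      obtain ⟨i₁, hi₁⟩ := Finset.exists_lt_of_sum_lt (by simpa using hd1 :
        (∑ i' : Fin n, (0:ℝ)) < ∑ i' : Fin n, ∑ j' : Fin m, if (i':ℕ) < i ∧ ¬ ((j':ℕ) < j) then P i' j' else 0)
      obtain ⟨j₁, hj₁⟩ := Finset.exists_lt_of_sum_lt (by simpa using hi₁.2 :
        (∑ j' : Fin m, (0:ℝ)) < ∑ j' : Fin m, if (i₁:ℕ) < i ∧ ¬ ((j':ℕ) < j) then P i₁ j' else 0)
      refine ⟨i₁, j₁, ?_⟩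
      by_cases h : (i₁:ℕ) < i ∧ ¬ ((j₁:ℕ) < j)
      · rw [if_pos h] at hj₁; exact ⟨h.1, h.2, hj₁.2⟩
      · rw [if_neg h] at hj₁; exact absurd hj₁.2 (lt_irrefl 0)
    have ex2 : ∃ (i₂ : Fin n) (j₂ : Fin m), ¬ ((i₂:ℕ) < i) ∧ (j₂:ℕ) < j ∧ 0 < P i₂ j₂ := by
      rw [hD2] at hd2
      obtain ⟨i₂, hi₂⟩ := Finset.exists_lt_of_sum_lt (by simpa using hd2 :
        (∑ i' : Fin n, (0:ℝ)) < ∑ i' : Fin n, ∑ j' : Fin m, if ¬ ((i':ℕ) < i) ∧ (j':ℕ) < j then P i' j' else 0)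
      obtain ⟨j₂, hj₂⟩ := Finset.exists_lt_of_sum_lt (by simpa using hi₂.2 :
        (∑ j' : Fin m, (0:ℝ)) < ∑ j' : Fin m, if ¬ ((i₂:ℕ) < i) ∧ (j':ℕ) < j then P i₂ j' else 0)
      refine ⟨i₂, j₂, ?_⟩
      by_cases h : ¬ ((i₂:ℕ) < i) ∧ (j₂:ℕ) < j
      · rw [if_pos h] at hj₂; exact ⟨h.1, h.2, hj₂.2⟩
      · rw [if_neg h] at hj₂; exact absurd hj₂.2 (lt_irrefl 0)
    obtain ⟨i₁, j₁, hi₁, hj₁, hp1⟩ := ex1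
    obtain ⟨i₂, j₂, hi₂, hj₂, hp2⟩ := ex2
    exact hnc i₁ i₂ j₁ j₂ (by omega) (by omega) hp1 hp2
  rcases hzero with h | h
  · have hHa : Hf P i j = cum a i := by linarith
    have : cum a i ≤ cum b j := by
      rw [← hHa]; exact Hf_le_right hP i j
    rw [hHa, min_eq_left this]
  · have hHb : Hf P i j = cum b j := by linarith
    have : cum b j ≤ cum a i := by
      rw [← hHb]; exact Hf_le_left hP i j
    rw [hHb, min_eq_right this]

lemma NW_nocross {n m : ℕ} {a : Fin n → ℝ} {b : Fin m → ℝ}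
    (ha : ∀ i, 0 ≤ a i) (hb : ∀ j, 0 ≤ b j) : NoCross (NW a b) := by
  intro i k j l hik hlj hij hkl
  have h1 : cum b (j:ℕ) < cum a ((i:ℕ)+1) := by
    by_contra hc
    push_neg at hc
    have : min (cum a ((i:ℕ)+1)) (cum b ((j:ℕ)+1)) - max (cum a (i:ℕ)) (cum b (j:ℕ)) ≤ 0 := by
      have := min_le_left (cum a ((i:ℕ)+1)) (cum b ((j:ℕ)+1))
      have := le_max_right (cum a (i:ℕ)) (cum b (j:ℕ))
      linarith
    rw [NW, max_eq_left this] at hij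
    exact lt_irrefl 0 hij
  have h2 : cum a ((k:ℕ)) < cum b ((l:ℕ)+1) := by
    by_contra hc
    push_neg at hc
    have : min (cum a ((k:ℕ)+1)) (cum b ((l:ℕ)+1)) - max (cum a (k:ℕ)) (cum b (l:ℕ)) ≤ 0 := by
      have := min_le_right (cum a ((k:ℕ)+1)) (cum b ((l:ℕ)+1))
      have := le_max_left (cum a (k:ℕ)) (cum b (l:ℕ))
      linarith
    rw [NW, max_eq_left this] at hkl
    exact lt_irrefl 0 hkl
  have h3 : cum a ((i:ℕ)+1) ≤ cum a (k:ℕ) := cum_mono ha (by omega)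
  have h4 : cum b ((l:ℕ)+1) ≤ cum b (j:ℕ) := cum_mono hb (by omega)
  linarith

lemma nocross_unique {n m : ℕ} {a : Fin n → ℝ} {b : Fin m → ℝ}
    {P P' : Fin n → Fin m → ℝ} (hP : P ∈ transportPolytope a b)
    (hP' : P' ∈ transportPolytope a b) (hnc : NoCross P) (hnc' : NoCross P') : P = P' := by
  funext i j
  rw [Hf_rec P i j, Hf_rec P' i j]
  rw [Hf_eq_min hP hnc, Hf_eq_min hP hnc, Hf_eq_min hP hnc, Hf_eq_min hP hnc,
    Hf_eq_min hP' hnc', Hf_eq_min hP' hnc', Hf_eq_min hP' hnc', Hf_eq_min hP' hnc']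

theorem convexAbsRpow (p : ℝ) (hp : 1 ≤ p) : ConvexOn ℝ Set.univ (fun t : ℝ => |t| ^ p) := by
  have h1 : ConvexOn ℝ Set.univ (fun t : ℝ => |t|) := by
    exact (convexOn_univ_norm (E := ℝ))
  have himg : (fun t : ℝ => |t|) '' Set.univ = Set.Ici 0 := by
    ext t
    simp only [Set.image_univ, Set.mem_range, Set.mem_Ici]
    constructor
    · rintro ⟨s, rfl⟩; positivity
    · intro ht; exact ⟨t, abs_of_nonneg ht⟩
  have hg : ConvexOn ℝ ((fun t : ℝ => |t|) '' Set.univ) (fun s : ℝ => s ^ p) := by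
    rw [himg]; exact convexOn_rpow hp
  have hmono : MonotoneOn (fun s : ℝ => s ^ p) ((fun t : ℝ => |t|) '' Set.univ) := by
    rw [himg]; intro u hu v _ huv
    exact Real.rpow_le_rpow hu huv (le_trans zero_le_one hp)
  exact hg.comp h1 hmono

-- submodularity
theorem submod (p : ℝ) (hp : 1 ≤ p) {s t w z : ℝ} (hst : s ≤ t) (hwz : w ≤ z) :
    |s - w| ^ p + |t - z| ^ p ≤ |s - z| ^ p + |t - w| ^ p := by
  set h : ℝ → ℝ := fun t => |t| ^ p with hh
  have hc := convexAbsRpow p hp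
  -- α = s-z ≤ β=s-w, γ=t-z ≤ δ=t-w, α+δ=β+γ
  have key : ∀ α β γ δ : ℝ, α ≤ β → β ≤ δ → α ≤ γ → γ ≤ δ → α + δ = β + γ →
      h β + h γ ≤ h α + h δ := by
    intro α β γ δ hab hbd hag hgd habd
    rcases eq_or_lt_of_le (hab.trans hbd) with heq | had
    · have hβ : β = α := le_antisymm (heq ▸ hbd) hab
      have hγ : γ = α := le_antisymm (heq ▸ hgd) hag
      rw [hβ, hγ, heq]
    · set lam := (δ - β) / (δ - α) with hlam
      have hden : 0 < δ - α := by linarith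
      have h0 : 0 ≤ lam := div_nonneg (by linarith) hden.le
      have h1' : lam ≤ 1 := by rw [hlam]; rw [div_le_one hden]; linarith
      have hβeq : β = lam * α + (1 - lam) * δ := by rw [hlam, show (δ - β) / (δ - α) * α + (1 - (δ - β) / (δ - α)) * δ = δ - (δ - β) / (δ - α) * (δ - α) by ring, div_mul_cancel₀ _ hden.ne']; ring
      have hγeq : γ = (1 - lam) * α + lam * δ := by
        field_simp [hlam]; nlinarith [habd]
      have c1 := hc.2 (Set.mem_univ α) (Set.mem_univ δ) h0 (by linarith) (by ring : lam + (1-lam) = 1)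
      have c2 := hc.2 (Set.mem_univ α) (Set.mem_univ δ) (by linarith : (0:ℝ) ≤ 1 - lam) h0 (by ring : (1-lam) + lam = 1)
      simp only [smul_eq_mul] at c1 c2
      calc h β + h γ = h (lam * α + (1-lam) * δ) + h ((1-lam) * α + lam * δ) := by rw [← hβeq, ← hγeq]
        _ ≤ (lam * h α + (1-lam) * h δ) + ((1-lam) * h α + lam * h δ) := add_le_add c1 c2
        _ = h α + h δ := by ring
  have := key (s - z) (s - w) (t - z) (t - w) (by linarith) (by linarith) (by linarith) (by linarith) (by ring)
  simpa [hh] using this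

lemma polytope_isClosed {n m : ℕ} (a : Fin n → ℝ) (b : Fin m → ℝ) :
    IsClosed (transportPolytope a b) := by
  have hcont : ∀ (i : Fin n) (j : Fin m),
      Continuous (fun P : Fin n → Fin m → ℝ => P i j) :=
    fun i j => (continuous_apply j).comp (continuous_apply i)
  have heq : transportPolytope a b =
      (⋂ (i : Fin n), ⋂ (j : Fin m), {P : Fin n → Fin m → ℝ | 0 ≤ P i j}) ∩
      ((⋂ (i : Fin n), {P : Fin n → Fin m → ℝ | ∑ j, P i j = a i}) ∩
       (⋂ (j : Fin m), {P : Fin n → Fin m → ℝ | ∑ i, P i j = b j})) := by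
    ext P
    simp only [transportPolytope, Set.mem_setOf_eq, Set.mem_inter_iff, Set.mem_iInter]
  rw [heq]
  refine IsClosed.inter ?_ (IsClosed.inter ?_ ?_)
  · exact isClosed_iInter fun i => isClosed_iInter fun j =>
      isClosed_le continuous_const (hcont i j)
  · exact isClosed_iInter fun i =>
      isClosed_eq (continuous_finset_sum _ fun j _ => hcont i j) continuous_const
  · exact isClosed_iInter fun j =>
      isClosed_eq (continuous_finset_sum _ fun i _ => hcont i j) continuous_const

lemma polytope_isCompact {n m : ℕ} {a : Fin n → ℝ} {b : Fin m → ℝ}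
    (ha : IsProbVec a) (hb : IsProbVec b) :
    IsCompact (transportPolytope a b) := by
  apply IsCompact.of_isClosed_subset
    (isCompact_univ_pi fun i => isCompact_univ_pi fun j => isCompact_Icc (a := (0:ℝ)) (b := 1))
    (polytope_isClosed a b)
  intro P hP
  rw [Set.mem_univ_pi]
  intro i
  rw [Set.mem_univ_pi]
  intro j
  constructor
  · exact hP.1 i j
  · calc P i j ≤ ∑ j', P i j' :=
          Finset.single_le_sum (fun j' _ => hP.1 i j') (Finset.mem_univ j)
      _ = a i := hP.2.1 i
      _ ≤ ∑ i', a i' := Finset.single_le_sum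
          (fun i' _ => by
            rw [← hP.2.1 i']
            exact Finset.sum_nonneg fun j' _ => hP.1 i' j') (Finset.mem_univ i)
      _ = 1 := ha.2

lemma cost_continuous {n m : ℕ} (c : Fin n → Fin m → ℝ) :
    Continuous (fun P : Fin n → Fin m → ℝ => ∑ i, ∑ j, P i j * c i j) := by
  apply continuous_finset_sum
  intro i _
  apply continuous_finset_sum
  intro j _
  exact ((continuous_apply_apply i j).mul continuous_const)

-- helper sums
lemma sum_ite_pair {n m : ℕ} (u : Fin n) (v : Fin m) (f : Fin n → Fin m → ℝ) :
    ∑ i : Fin n, ∑ j : Fin m, (if i = u ∧ j = v then (1:ℝ) else 0) * f i j = f u v := by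
  have : ∀ i : Fin n, ∀ j : Fin m, (if i = u ∧ j = v then (1:ℝ) else 0) * f i j
      = if i = u then (if j = v then f i j else 0) else 0 := by
    intro i j
    by_cases h1 : i = u <;> by_cases h2 : j = v <;> simp [h1, h2]
  rw [Finset.sum_congr rfl (fun i _ => Finset.sum_congr rfl (fun j _ => this i j))]
  simp [Finset.sum_ite_eq']

lemma sum_ite_pair_row {n m : ℕ} (u : Fin n) (v : Fin m) (i : Fin n) :
    ∑ j : Fin m, (if i = u ∧ j = v then (1:ℝ) else 0) = if i = u then 1 else 0 := by
  by_cases h : i = u <;> simp [h]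

lemma sum_ite_pair_col {n m : ℕ} (u : Fin n) (v : Fin m) (j : Fin m) :
    ∑ i : Fin n, (if i = u ∧ j = v then (1:ℝ) else 0) = if j = v then 1 else 0 := by
  by_cases h : j = v <;> simp [h]


lemma NW_is_min {n m : ℕ} {a : Fin n → ℝ} {b : Fin m → ℝ}
    (ha : IsProbVec a) (hb : IsProbVec b)
    {x : Fin n → ℝ} {y : Fin m → ℝ} (hx : Monotone x) (hy : Monotone y)
    {p : ℝ} (hp : 1 ≤ p) :
    ∀ P ∈ transportPolytope a b,
      (∑ i, ∑ j, NW a b i j * |x i - y j| ^ p) ≤ ∑ i, ∑ j, P i j * |x i - y j| ^ p := by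
  classical
  set c : Fin n → Fin m → ℝ := fun i j => |x i - y j| ^ p with hc
  set cost : (Fin n → Fin m → ℝ) → ℝ := fun P => ∑ i, ∑ j, P i j * c i j with hcost
  have hU := polytope_isCompact ha hb
  have hne : (transportPolytope a b).Nonempty := ⟨NW a b, NW_mem ha hb⟩
  obtain ⟨R₀, hR₀U, hR₀min⟩ := hU.exists_isMinOn hne (cost_continuous c).continuousOn
  set S := transportPolytope a b ∩ {P | cost P = cost R₀} with hS
  have hScmp : IsCompact S := hU.inter_right (isClosed_eq (cost_continuous c) continuous_const)
  have hSne : S.Nonempty := ⟨R₀, hR₀U, rfl⟩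
  set w : Fin n → Fin m → ℝ := fun i j => (((i:ℕ):ℝ) - ((j:ℕ):ℝ))^2 with hw
  obtain ⟨R, hRS, hRmin⟩ := hScmp.exists_isMinOn hSne (cost_continuous w).continuousOn
  have hRU : R ∈ transportPolytope a b := hRS.1
  have hRV : cost R = cost R₀ := hRS.2
  have hnc : NoCross R := by
    intro i k j l hik hlj hij hkl
    have hink : i ≠ k := Fin.ne_of_val_ne (by omega)
    have hjl : j ≠ l := Fin.ne_of_val_ne (by omega)
    set δ : ℝ := min (R i j) (R k l) with hδdef
    have hδ : 0 < δ := lt_min hij hkl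
    set e : Fin n → Fin m → ℝ := fun i' j' =>
      (if i' = i ∧ j' = l then (1:ℝ) else 0) + (if i' = k ∧ j' = j then (1:ℝ) else 0)
      - (if i' = i ∧ j' = j then (1:ℝ) else 0) - (if i' = k ∧ j' = l then (1:ℝ) else 0) with he
    set R' : Fin n → Fin m → ℝ := fun i' j' => R i' j' + δ * e i' j' with hR'
    have hki : k ≠ i := hink.symm
    have hlj2 : l ≠ j := hjl.symm
    -- point values of e
    have heil : e i l = 1 := by simp [he, hink, hlj2]
    have hekj : e k j = 1 := by simp [he, hki, hjl]
    have heij : e i j = -1 := by simp [he, hink, hjl, hlj2]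
    have hekl : e k l = -1 := by simp [he, hki, hink, hlj2]
    have hezero : ∀ i' j', (i' ≠ i ∧ i' ≠ k) ∨ (j' ≠ j ∧ j' ≠ l) → e i' j' = 0 := by
      intro i' j' h
      rcases h with ⟨h1, h2⟩ | ⟨h1, h2⟩ <;> simp [he, h1, h2]
    -- R' is in the polytope
    have hR'U : R' ∈ transportPolytope a b := by
      refine ⟨?_, ?_, ?_⟩
      · intro i' j'
        show 0 ≤ R i' j' + δ * e i' j'
        by_cases hi1 : i' = i
        · by_cases hj1 : j' = j
          · rw [hi1, hj1, heij]
            have := min_le_left (R i j) (R k l)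
            linarith
          · by_cases hj2 : j' = l
            · rw [hi1, hj2, heil]
              have := hRU.1 i l
              linarith
            · rw [hezero i' j' (Or.inr ⟨hj1, hj2⟩)]
              have := hRU.1 i' j'
              linarith
        · by_cases hi2 : i' = k
          · by_cases hj1 : j' = j
            · rw [hi2, hj1, hekj]
              have := hRU.1 k j
              linarith
            · by_cases hj2 : j' = l
              · rw [hi2, hj2, hekl]
                have := min_le_right (R i j) (R k l)
                linarith
              · rw [hezero i' j' (Or.inr ⟨hj1, hj2⟩)]
                have := hRU.1 i' j'
                linarith
          · rw [hezero i' j' (Or.inl ⟨hi1, hi2⟩)]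
            have := hRU.1 i' j'
            linarith
      · intro i'
        show (∑ j', (R i' j' + δ * e i' j')) = a i'
        rw [Finset.sum_add_distrib, ← Finset.mul_sum]
        have : ∑ j', e i' j' = 0 := by
          have hee : ∀ j' : Fin m, e i' j'
              = (if i' = i ∧ j' = l then (1:ℝ) else 0) + (if i' = k ∧ j' = j then (1:ℝ) else 0)
              - (if i' = i ∧ j' = j then (1:ℝ) else 0) - (if i' = k ∧ j' = l then (1:ℝ) else 0) :=
            fun j' => rfl
          rw [Finset.sum_congr rfl (fun j' _ => hee j')]
          rw [Finset.sum_sub_distrib, Finset.sum_sub_distrib, Finset.sum_add_distrib]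
          rw [sum_ite_pair_row i l i', sum_ite_pair_row k j i',
            sum_ite_pair_row i j i', sum_ite_pair_row k l i']
          ring
        rw [this, mul_zero, add_zero]
        exact hRU.2.1 i'
      · intro j'
        show (∑ i', (R i' j' + δ * e i' j')) = b j'
        rw [Finset.sum_add_distrib, ← Finset.mul_sum]
        have : ∑ i', e i' j' = 0 := by
          have hee : ∀ i' : Fin n, e i' j'
              = (if i' = i ∧ j' = l then (1:ℝ) else 0) + (if i' = k ∧ j' = j then (1:ℝ) else 0)
              - (if i' = i ∧ j' = j then (1:ℝ) else 0) - (if i' = k ∧ j' = l then (1:ℝ) else 0) :=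
            fun i' => rfl
          rw [Finset.sum_congr rfl (fun i' _ => hee i')]
          rw [Finset.sum_sub_distrib, Finset.sum_sub_distrib, Finset.sum_add_distrib]
          rw [sum_ite_pair_col i l j', sum_ite_pair_col k j j',
            sum_ite_pair_col i j j', sum_ite_pair_col k l j']
          ring
        rw [this, mul_zero, add_zero]
        exact hRU.2.2 j'
    -- expansion of the objective at R'
    have expand : ∀ f : Fin n → Fin m → ℝ,
        (∑ i', ∑ j', R' i' j' * f i' j')
        = (∑ i', ∑ j', R i' j' * f i' j') + δ * (f i l + f k j - f i j - f k l) := by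
      intro f
      have hterm : ∀ i' j', R' i' j' * f i' j'
          = R i' j' * f i' j'
            + δ * ((if i' = i ∧ j' = l then (1:ℝ) else 0) * f i' j')
            + δ * ((if i' = k ∧ j' = j then (1:ℝ) else 0) * f i' j')
            - δ * ((if i' = i ∧ j' = j then (1:ℝ) else 0) * f i' j')
            - δ * ((if i' = k ∧ j' = l then (1:ℝ) else 0) * f i' j') := by
        intro i' j'
        show (R i' j' + δ * e i' j') * f i' j' = _
        have hee : e i' j'
            = (if i' = i ∧ j' = l then (1:ℝ) else 0) + (if i' = k ∧ j' = j then (1:ℝ) else 0)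
            - (if i' = i ∧ j' = j then (1:ℝ) else 0) - (if i' = k ∧ j' = l then (1:ℝ) else 0) := rfl
        rw [hee]
        ring
      rw [Finset.sum_congr rfl (fun i' _ => Finset.sum_congr rfl (fun j' _ => hterm i' j'))]
      simp only [Finset.sum_add_distrib, Finset.sum_sub_distrib, ← Finset.mul_sum]
      rw [sum_ite_pair i l f, sum_ite_pair k j f, sum_ite_pair i j f, sum_ite_pair k l f]
      ring
    -- cost of R'
    have hsub : c i l + c k j - c i j - c k l ≤ 0 := by
      have hxik : x i ≤ x k := hx (le_of_lt (Fin.lt_def.mpr hik))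
      have hylj : y l ≤ y j := hy (le_of_lt (Fin.lt_def.mpr hlj))
      have := submod p hp hxik hylj
      show |x i - y l| ^ p + |x k - y j| ^ p - |x i - y j| ^ p - |x k - y l| ^ p ≤ 0
      linarith
    have hcostR' : cost R' = cost R + δ * (c i l + c k j - c i j - c k l) := expand c
    have hge : cost R₀ ≤ cost R' := hR₀min hR'U
    have hle : cost R' ≤ cost R := by
      rw [hcostR']
      nlinarith
    have hR'S : R' ∈ S := ⟨hR'U, le_antisymm (by linarith [hRV]) (by linarith [hRV])⟩
    -- secondary objective strictly decreases
    have hwdec : w i l + w k j - w i j - w k l < 0 := by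
      have hikR : ((i:ℕ):ℝ) < ((k:ℕ):ℝ) := by exact_mod_cast hik
      have hljR : ((l:ℕ):ℝ) < ((j:ℕ):ℝ) := by exact_mod_cast hlj
      show (((i:ℕ):ℝ) - ((l:ℕ):ℝ))^2 + (((k:ℕ):ℝ) - ((j:ℕ):ℝ))^2
        - (((i:ℕ):ℝ) - ((j:ℕ):ℝ))^2 - (((k:ℕ):ℝ) - ((l:ℕ):ℝ))^2 < 0
      nlinarith
    have hψ : (∑ i', ∑ j', R' i' j' * w i' j') < ∑ i', ∑ j', R i' j' * w i' j' := by
      rw [expand w]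
      nlinarith
    exact absurd (hRmin hR'S) (not_le.2 hψ)
  have hReq : R = NW a b :=
    nocross_unique hRU (NW_mem ha hb) hnc (NW_nocross ha.1 hb.1)
  intro P hP
  calc (∑ i, ∑ j, NW a b i j * |x i - y j| ^ p) = cost (NW a b) := rfl
    _ = cost R := by rw [hReq]
    _ = cost R₀ := hRV
    _ ≤ cost P := hR₀min hP

theorem stmt5_sorted (n m : ℕ) (hn : 1 ≤ n) (hm : 1 ≤ m)
    (a : Fin n → ℝ) (b : Fin m → ℝ) (ha : IsProbVec a) (hb : IsProbVec b)
    (x : Fin n → ℝ) (y : Fin m → ℝ) (hx : Monotone x) (hy : Monotone y)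
    (p : ℝ) (hp : 1 ≤ p)
    (F G : ℝ → ℝ)
    (hF : ∀ t, F t = ∑ i, if x i ≤ t then a i else 0)
    (hG : ∀ t, G t = ∑ j, if y j ≤ t then b j else 0)
    (Finv Ginv : ℝ → ℝ)
    (hFinv : ∀ u, Finv u = sInf {t : ℝ | u ≤ F t})
    (hGinv : ∀ u, Ginv u = sInf {t : ℝ | u ≤ G t}) :
    IsLeast ((fun P => ∑ i, ∑ j, P i j * |x i - y j| ^ p) '' transportPolytope a b)
      (∫ u in Set.Ioo (0 : ℝ) 1, |Finv u - Ginv u| ^ p) := by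
  constructor
  · exact ⟨NW a b, NW_mem ha hb,
      (integral_eq_NW_cost hn hm ha hb hx hy p hF hG hFinv hGinv).symm⟩
  · rintro v ⟨P, hP, rfl⟩
    rw [integral_eq_NW_cost hn hm ha hb hx hy p hF hG hFinv hGinv]
    exact NW_is_min ha hb hx hy hp P hP
end Stmt5Aux

open Stmt5Aux in
theorem stmt5 (n m : ℕ) (hn : 1 ≤ n) (hm : 1 ≤ m)
    (a : Fin n → ℝ) (b : Fin m → ℝ) (ha : IsProbVec a) (hb : IsProbVec b)
    (x : Fin n → ℝ) (y : Fin m → ℝ) (p : ℝ) (hp : 1 ≤ p)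
    (F G : ℝ → ℝ)
    (hF : ∀ t, F t = ∑ i, if x i ≤ t then a i else 0)
    (hG : ∀ t, G t = ∑ j, if y j ≤ t then b j else 0)
    (Finv Ginv : ℝ → ℝ)
    (hFinv : ∀ u, Finv u = sInf {t : ℝ | u ≤ F t})
    (hGinv : ∀ u, Ginv u = sInf {t : ℝ | u ≤ G t}) :
    IsLeast ((fun P => ∑ i, ∑ j, P i j * |x i - y j| ^ p) '' transportPolytope a b)
      (∫ u in Set.Ioo (0 : ℝ) 1, |Finv u - Ginv u| ^ p) := by
  classical
  set σ : Equiv.Perm (Fin n) := Tuple.sort x with hσ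
  set τ : Equiv.Perm (Fin m) := Tuple.sort y with hτ
  have hx' : Monotone (x ∘ σ) := Tuple.monotone_sort x
  have hy' : Monotone (y ∘ τ) := Tuple.monotone_sort y
  have ha' : IsProbVec (a ∘ σ) := ⟨fun i => ha.1 _, by
    rw [show (∑ i, (a ∘ σ) i) = ∑ i, a i from Equiv.sum_comp σ a]; exact ha.2⟩
  have hb' : IsProbVec (b ∘ τ) := ⟨fun j => hb.1 _, by
    rw [show (∑ j, (b ∘ τ) j) = ∑ j, b j from Equiv.sum_comp τ b]; exact hb.2⟩
  have hF' : ∀ t, F t = ∑ i, if (x ∘ σ) i ≤ t then (a ∘ σ) i else 0 := by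
    intro t
    rw [hF t, ← Equiv.sum_comp σ (fun i => if x i ≤ t then a i else 0)]
    rfl
  have hG' : ∀ t, G t = ∑ j, if (y ∘ τ) j ≤ t then (b ∘ τ) j else 0 := by
    intro t
    rw [hG t, ← Equiv.sum_comp τ (fun j => if y j ≤ t then b j else 0)]
    rfl
  have key := stmt5_sorted n m hn hm (a ∘ σ) (b ∘ τ) ha' hb' (x ∘ σ) (y ∘ τ) hx' hy' p hp
    F G hF' hG' Finv Ginv hFinv hGinv
  have himg : ((fun P => ∑ i, ∑ j, P i j * |x i - y j| ^ p) '' transportPolytope a b)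
      = ((fun P => ∑ i, ∑ j, P i j * |(x ∘ σ) i - (y ∘ τ) j| ^ p) ''
          transportPolytope (a ∘ σ) (b ∘ τ)) := by
    ext v
    constructor
    · rintro ⟨P, hP, rfl⟩
      refine ⟨fun i j => P (σ i) (τ j), ⟨fun i j => hP.1 _ _, fun i => ?_, fun j => ?_⟩, ?_⟩
      · rw [show (∑ j, P (σ i) (τ j)) = ∑ j, P (σ i) j from Equiv.sum_comp τ (P (σ i))]
        exact hP.2.1 (σ i)
      · rw [show (∑ i', P (σ i') (τ j)) = ∑ i', P i' (τ j) from
          Equiv.sum_comp σ (fun i' => P i' (τ j))]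
        exact hP.2.2 (τ j)
      · show (∑ i, ∑ j, P (σ i) (τ j) * |x (σ i) - y (τ j)| ^ p)
            = ∑ i, ∑ j, P i j * |x i - y j| ^ p
        calc (∑ i, ∑ j, P (σ i) (τ j) * |x (σ i) - y (τ j)| ^ p)
            = ∑ i, ∑ j, P (σ i) j * |x (σ i) - y j| ^ p :=
              Finset.sum_congr rfl (fun i _ =>
                Equiv.sum_comp τ (fun j => P (σ i) j * |x (σ i) - y j| ^ p))
          _ = ∑ i, ∑ j, P i j * |x i - y j| ^ p :=
              Equiv.sum_comp σ (fun i => ∑ j, P i j * |x i - y j| ^ p)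
    · rintro ⟨P, hP, rfl⟩
      refine ⟨fun i j => P (σ.symm i) (τ.symm j),
        ⟨fun i j => hP.1 _ _, fun i => ?_, fun j => ?_⟩, ?_⟩
      · rw [show (∑ j, P (σ.symm i) (τ.symm j)) = ∑ j, P (σ.symm i) j from
          Equiv.sum_comp τ.symm (P (σ.symm i))]
        have := hP.2.1 (σ.symm i)
        simpa using this
      · rw [show (∑ i', P (σ.symm i') (τ.symm j)) = ∑ i', P i' (τ.symm j) from
          Equiv.sum_comp σ.symm (fun i' => P i' (τ.symm j))]
        have := hP.2.2 (τ.symm j)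
        simpa using this
      · show (∑ i, ∑ j, P (σ.symm i) (τ.symm j) * |x i - y j| ^ p)
            = ∑ i, ∑ j, P i j * |x (σ i) - y (τ j)| ^ p
        calc (∑ i, ∑ j, P (σ.symm i) (τ.symm j) * |x i - y j| ^ p)
            = ∑ i, ∑ j, P (σ.symm (σ i)) (τ.symm j) * |x (σ i) - y j| ^ p :=
              (Equiv.sum_comp σ
                (fun i => ∑ j, P (σ.symm i) (τ.symm j) * |x i - y j| ^ p)).symm
          _ = ∑ i, ∑ j, P i (τ.symm j) * |x (σ i) - y j| ^ p := by simp
          _ = ∑ i, ∑ j, P i (τ.symm (τ j)) * |x (σ i) - y (τ j)| ^ p :=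
              Finset.sum_congr rfl (fun i _ =>
                (Equiv.sum_comp τ
                  (fun j => P i (τ.symm j) * |x (σ i) - y j| ^ p)).symm)
          _ = ∑ i, ∑ j, P i j * |x (σ i) - y (τ j)| ^ p := by simp
  rw [himg]
  exact key
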